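/- arXiv:1911.04419 — 2 statements merged into one kernel-verified Lean document; each statement's English description precedes it below -/
import Mathlib

section
/- An A-bounded operator T is A-normaloid (i.e., r_A(T) = ‖T‖_A) if and only if ‖Tⁿ‖_A = ‖T‖_A^n for all positive integers n. -/
open Filter

variable {H : Type*} [NormedAddCommGroup H] [InnerProductSpace ℂ H] [CompleteSpace H]

/-- The seminorm induced by a positive operator `A`: `‖x‖_A = ⟨Ax,x⟩^{1/2}`. -/
noncomputable def anorm (A : H →L[ℂ] H) (x : H) : ℝ :=
  Real.sqrt ((inner ℂ (A x) x : ℂ).re)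

/-- `T` is `A`-bounded: there is `c > 0` with `‖Tx‖_A ≤ c‖x‖_A` for all `x`. -/
def ABounded (A T : H →L[ℂ] H) : Prop :=
  ∃ c > 0, ∀ x : H, anorm A (T x) ≤ c * anorm A x

/-- The `A`-operator seminorm `‖T‖_A = sup{‖Tx‖_A : ‖x‖_A = 1}`. -/
noncomputable def opAnorm (A T : H →L[ℂ] H) : ℝ :=
  sSup {c : ℝ | ∃ x : H, anorm A x = 1 ∧ c = anorm A (T x)}

/-- The `A`-spectral radius `r_A(T) = inf_{n ≥ 1} ‖Tⁿ‖_A^{1/n}`. -/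
noncomputable def rA (A T : H →L[ℂ] H) : ℝ :=
  ⨅ n : ℕ+, opAnorm A (T ^ (n : ℕ)) ^ (((n : ℕ) : ℝ)⁻¹)

/-- The `A`-numerical radius `ω_A(T) = sup{|⟨Tx,x⟩_A| : ‖x‖_A = 1}`. -/
noncomputable def wA (A T : H →L[ℂ] H) : ℝ :=
  sSup {c : ℝ | ∃ x : H, anorm A x = 1 ∧ c = ‖(inner ℂ (A (T x)) x : ℂ)‖}

lemma anorm_nonneg (A : H →L[ℂ] H) (x : H) : 0 ≤ anorm A x := Real.sqrt_nonneg _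

lemma anorm_smul_real (A : H →L[ℂ] H) (r : ℝ) (hr : 0 ≤ r) (x : H) :
    anorm A ((r : ℂ) • x) = r * anorm A x := by
  unfold anorm
  rw [map_smul, inner_smul_left, inner_smul_right]
  simp only [Complex.conj_ofReal, ← mul_assoc, ← Complex.ofReal_mul]
  rw [show ((r * r : ℝ) : ℂ) * inner ℂ (A x) x = ((r^2 : ℝ) : ℂ) * inner ℂ (A x) x by
    rw [pow_two]]
  rw [Complex.re_ofReal_mul, Real.sqrt_mul (by positivity), Real.sqrt_sq hr]

lemma exists_anorm_one (A : H →L[ℂ] H) (hA : A.IsPositive) (hA0 : A ≠ 0) :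
    ∃ x : H, anorm A x = 1 := by
  have h : ∃ x : H, (inner ℂ (A x) x : ℂ).re ≠ 0 := by
    by_contra h
    push_neg at h
    apply hA0
    have hsym : (A : H →ₗ[ℂ] H).IsSymmetric := hA.1
    have hz : ∀ x : H, (inner ℂ ((A : H →ₗ[ℂ] H) x) x : ℂ) = 0 := by
      intro x
      have h1 := hsym.conj_inner_sym x x
      have him : (inner ℂ (A x) x : ℂ).im = 0 := by
        have := congrArg Complex.im h1
        simp only [Complex.conj_im] at this
        rw [show (inner ℂ ((A : H →ₗ[ℂ] H) x) x : ℂ) = inner ℂ (A x) x from rfl] at this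
        linarith
      exact Complex.ext (h x) him
    have := (inner_map_self_eq_zero (A : H →ₗ[ℂ] H)).mp hz
    ext x
    have := congrFun (congrArg (fun f => f.toFun) this) x
    simpa using this
  obtain ⟨x, hx⟩ := h
  have hpos : 0 < (inner ℂ (A x) x : ℂ).re := lt_of_le_of_ne (hA.2 x) (Ne.symm hx)
  set r := Real.sqrt ((inner ℂ (A x) x : ℂ).re)
  have hr : 0 < r := Real.sqrt_pos.mpr hpos
  refine ⟨((r⁻¹ : ℝ) : ℂ) • x, ?_⟩
  rw [anorm_smul_real A _ (by positivity)]
  show r⁻¹ * r = 1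
  field_simp

lemma anorm_set_nonempty (A T : H →L[ℂ] H) (hA : A.IsPositive) (hA0 : A ≠ 0) :
    {c : ℝ | ∃ x : H, anorm A x = 1 ∧ c = anorm A (T x)}.Nonempty := by
  obtain ⟨x, hx⟩ := exists_anorm_one A hA hA0
  exact ⟨anorm A (T x), x, hx, rfl⟩

lemma anorm_set_bddAbove (A T : H →L[ℂ] H) (hT : ABounded A T) :
    BddAbove {c : ℝ | ∃ x : H, anorm A x = 1 ∧ c = anorm A (T x)} := by
  obtain ⟨c, _, hc⟩ := hT
  exact ⟨c, fun y ⟨x, hx1, hx2⟩ => by rw [hx2]; simpa [hx1] using hc x⟩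

lemma opAnorm_nonneg (A T : H →L[ℂ] H) (hA : A.IsPositive) (hA0 : A ≠ 0)
    (hT : ABounded A T) : 0 ≤ opAnorm A T := by
  obtain ⟨x, hx⟩ := exists_anorm_one A hA hA0
  exact le_trans (anorm_nonneg A (T x))
    (le_csSup (anorm_set_bddAbove A T hT) ⟨x, hx, rfl⟩)

lemma opAnorm_le (A T : H →L[ℂ] H) (hA : A.IsPositive) (hA0 : A ≠ 0) {M : ℝ}
    (h : ∀ x : H, anorm A x = 1 → anorm A (T x) ≤ M) : opAnorm A T ≤ M := by
  apply csSup_le (anorm_set_nonempty A T hA hA0)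
  rintro y ⟨x, hx1, rfl⟩
  exact h x hx1

lemma anorm_apply_le (A T : H →L[ℂ] H) (hT : ABounded A T) (x : H) :
    anorm A (T x) ≤ opAnorm A T * anorm A x := by
  obtain ⟨c, hc0, hc⟩ := hT
  rcases eq_or_lt_of_le (anorm_nonneg A x) with h0 | hpos
  · have : anorm A (T x) ≤ 0 := by
      have := hc x
      rw [← h0] at this
      simpa using this
    rw [← h0, mul_zero]
    exact this
  · set a := anorm A x
    set y := ((a⁻¹ : ℝ) : ℂ) • x with hy
    have hay : anorm A y = 1 := by
      rw [hy, anorm_smul_real A _ (by positivity)]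
      field_simp
      rfl
    have hTy : anorm A (T y) = a⁻¹ * anorm A (T x) := by
      rw [hy, map_smul, anorm_smul_real A _ (by positivity)]
    have hle : anorm A (T y) ≤ opAnorm A T :=
      le_csSup (anorm_set_bddAbove A T ⟨c, hc0, hc⟩) ⟨y, hay, rfl⟩
    rw [hTy] at hle
    calc anorm A (T x) = a * (a⁻¹ * anorm A (T x)) := by field_simp
    _ ≤ a * opAnorm A T := by
        apply mul_le_mul_of_nonneg_left hle (le_of_lt hpos)
    _ = opAnorm A T * a := mul_comm _ _

lemma ABounded_pow (A T : H →L[ℂ] H) (hT : ABounded A T) (n : ℕ) :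
    ABounded A (T ^ n) := by
  induction n with
  | zero => exact ⟨1, one_pos, fun x => by simp⟩
  | succ n ih =>
    obtain ⟨c, hc0, hc⟩ := ih
    obtain ⟨d, hd0, hd⟩ := hT
    refine ⟨c * d, by positivity, fun x => ?_⟩
    have : (T ^ (n + 1)) x = (T ^ n) (T x) := by
      rw [pow_succ]; rfl
    rw [this, mul_assoc]
    exact le_trans (hc (T x)) (mul_le_mul_of_nonneg_left (hd x) (le_of_lt hc0))

lemma anorm_pow_apply_le (A T : H →L[ℂ] H) (hA : A.IsPositive) (hA0 : A ≠ 0)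
    (hT : ABounded A T) (n : ℕ) (x : H) :
    anorm A ((T ^ n) x) ≤ opAnorm A T ^ n * anorm A x := by
  induction n generalizing x with
  | zero => simp
  | succ n ih =>
    have h1 : (T ^ (n + 1)) x = (T ^ n) (T x) := by rw [pow_succ]; rfl
    calc anorm A ((T ^ (n+1)) x) = anorm A ((T ^ n) (T x)) := by rw [h1]
    _ ≤ opAnorm A T ^ n * anorm A (T x) := ih (T x)
    _ ≤ opAnorm A T ^ n * (opAnorm A T * anorm A x) := by
        apply mul_le_mul_of_nonneg_left (anorm_apply_le A T hT x)
        exact pow_nonneg (opAnorm_nonneg A T hA hA0 hT) n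
    _ = opAnorm A T ^ (n+1) * anorm A x := by ring

lemma opAnorm_pow_le (A T : H →L[ℂ] H) (hA : A.IsPositive) (hA0 : A ≠ 0)
    (hT : ABounded A T) (n : ℕ) : opAnorm A (T ^ n) ≤ opAnorm A T ^ n := by
  apply opAnorm_le A _ hA hA0
  intro x hx
  simpa [hx] using anorm_pow_apply_le A T hA hA0 hT n x

lemma opAnorm_pow_nonneg (A T : H →L[ℂ] H) (hA : A.IsPositive) (hA0 : A ≠ 0)
    (hT : ABounded A T) (n : ℕ) : 0 ≤ opAnorm A (T ^ n) :=
  opAnorm_nonneg A _ hA hA0 (ABounded_pow A T hT n)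
theorem stmt_10 (A T : H →L[ℂ] H) (hA : A.IsPositive) (hA0 : A ≠ 0)
    (hT : ABounded A T) :
    rA A T = opAnorm A T ↔ ∀ n : ℕ, 0 < n → opAnorm A (T ^ n) = (opAnorm A T) ^ n := by
  have hop : 0 ≤ opAnorm A T := opAnorm_nonneg A T hA hA0 hT
  have hbdd : BddBelow (Set.range fun n : ℕ+ =>
      opAnorm A (T ^ (n : ℕ)) ^ (((n : ℕ) : ℝ)⁻¹)) := by
    refine ⟨0, ?_⟩
    rintro y ⟨n, rfl⟩
    exact Real.rpow_nonneg (opAnorm_pow_nonneg A T hA hA0 hT n) _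
  constructor
  · intro hr n hn
    have hle := opAnorm_pow_le A T hA hA0 hT n
    have hpn := opAnorm_pow_nonneg A T hA hA0 hT n
    have hnn : ((n : ℕ) : ℝ) ≠ 0 := Nat.cast_ne_zero.mpr hn.ne'
    have h1 : rA A T ≤ opAnorm A (T ^ n) ^ (((n : ℕ) : ℝ)⁻¹) := by
      have := ciInf_le hbdd (⟨n, hn⟩ : ℕ+)
      exact this
    rw [hr] at h1
    have h2 : opAnorm A T ^ n ≤ opAnorm A (T ^ n) := by
      calc opAnorm A T ^ n ≤ (opAnorm A (T ^ n) ^ (((n : ℕ) : ℝ)⁻¹)) ^ n :=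
            pow_le_pow_left₀ hop h1 n
      _ = opAnorm A (T ^ n) := by
          rw [← Real.rpow_natCast (opAnorm A (T ^ n) ^ (((n : ℕ) : ℝ)⁻¹)) n,
            ← Real.rpow_mul hpn, inv_mul_cancel₀ hnn, Real.rpow_one]
    exact le_antisymm hle h2
  · intro h
    unfold rA
    have key : ∀ n : ℕ+, opAnorm A (T ^ (n : ℕ)) ^ (((n : ℕ) : ℝ)⁻¹) = opAnorm A T := by
      intro n
      have hnn : ((n : ℕ) : ℝ) ≠ 0 := Nat.cast_ne_zero.mpr n.pos.ne'
      rw [h n n.pos, ← Real.rpow_natCast (opAnorm A T) (n : ℕ), ← Real.rpow_mul hop,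
        mul_inv_cancel₀ hnn, Real.rpow_one]
    calc (⨅ n : ℕ+, opAnorm A (T ^ (n : ℕ)) ^ (((n : ℕ) : ℝ)⁻¹))
        = ⨅ _ : ℕ+, opAnorm A T := by exact congrArg _ (funext key)
    _ = opAnorm A T := ciInf_const
end

section
/- If T is an A-bounded operator, then for all positive integers n, ω_A(Tⁿ) ≤ (ω_A(T))ⁿ (power inequality for the A-numerical radius). -/
open Filter

variable {H : Type*} [NormedAddCommGroup H] [InnerProductSpace ℂ H] [CompleteSpace H]

set_option linter.unusedSectionVars false
set_option maxHeartbeats 1000000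

lemma anorm_sq (A : H →L[ℂ] H) (hA : A.IsPositive) (x : H) :
    anorm A x ^ 2 = (inner ℂ (A x) x : ℂ).re := Real.sq_sqrt (hA.re_inner_nonneg_left x)

lemma inner_A_conj (A : H →L[ℂ] H) (hA : A.IsPositive) (u v : H) :
    (inner ℂ (A v) u : ℂ) = starRingEnd ℂ (inner ℂ (A u) v : ℂ) := by
  conv_lhs => rw [← hA.isSelfAdjoint.adjoint_eq]
  rw [ContinuousLinearMap.adjoint_inner_left, ← inner_conj_symm]

lemma acs (A : H →L[ℂ] H) (hA : A.IsPositive) (u v : H) :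
    ‖(inner ℂ (A u) v : ℂ)‖ ≤ anorm A u * anorm A v := by
  set b : ℂ := inner ℂ (A u) v with hbdef
  by_cases hb : b = 0
  · rw [hb]
    simpa using mul_nonneg (anorm_nonneg A u) (anorm_nonneg A v)
  have habs : (‖b‖ : ℂ) ≠ 0 := by
    simpa using (norm_ne_zero_iff.mpr hb)
  have key : ∀ t : ℝ, 0 ≤ (inner ℂ (A v) v : ℂ).re * (t * t)
      + (2 * ‖b‖) * t + (inner ℂ (A u) u : ℂ).re := by
    intro t
    set s : ℂ := (t : ℂ) * (starRingEnd ℂ b / ‖b‖) with hsdef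
    have hcb : (starRingEnd ℂ) b * b = (((‖b‖)^2 : ℝ) : ℂ) := by
      rw [mul_comm, Complex.mul_conj, Complex.normSq_eq_norm_sq]
    have hsb : s * b = ((t * ‖b‖ : ℝ) : ℂ) := by
      rw [hsdef]
      field_simp
      rw [mul_assoc, hcb]
      push_cast; ring
    have habss : ‖s‖ = |t| := by
      rw [hsdef]
      rw [norm_mul, norm_div, Complex.norm_conj, Complex.norm_real, Real.norm_eq_abs, Complex.norm_real, Real.norm_eq_abs,
        abs_of_nonneg (norm_nonneg b), div_self (norm_ne_zero_iff.mpr hb), mul_one]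
    have hss : s * starRingEnd ℂ s = ((t * t : ℝ) : ℂ) := by
      rw [Complex.mul_conj, Complex.normSq_eq_norm_sq, habss]
      norm_cast
      rw [sq_abs]; ring
    have expand : (inner ℂ (A (u + s • v)) (u + s • v) : ℂ)
        = inner ℂ (A u) u + ((s * b) + starRingEnd ℂ (s * b)) + (s * starRingEnd ℂ s) * inner ℂ (A v) v := by
      simp only [map_add, map_smul, inner_add_left, inner_add_right, inner_smul_left,
        inner_smul_right, inner_A_conj A hA u v, ← hbdef, map_mul]
      ring
    have h0 := hA.re_inner_nonneg_left (u + s • v)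
    rw [expand, hsb, hss] at h0
    simp only [RCLike.re_to_complex, Complex.add_re, Complex.conj_re, Complex.ofReal_re,
      Complex.mul_re, Complex.ofReal_im, zero_mul, sub_zero] at h0
    nlinarith [h0]
  have hd := discrim_le_zero key
  rw [discrim] at hd
  have h1 : ‖b‖ ^ 2 ≤ ((inner ℂ (A v) v : ℂ).re) * ((inner ℂ (A u) u : ℂ).re) := by nlinarith
  have h2 := Real.sqrt_le_sqrt h1
  have hnn : (0:ℝ) ≤ (inner ℂ (A v) v : ℂ).re := hA.re_inner_nonneg_left v
  rw [Real.sqrt_mul hnn] at h2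
  calc ‖b‖ = Real.sqrt (‖b‖ ^ 2) := by
        rw [Real.sqrt_sq (norm_nonneg b)]
    _ ≤ _ := h2
    _ = anorm A u * anorm A v := mul_comm _ _

lemma anorm_smul (A : H →L[ℂ] H) (c : ℂ) (y : H) :
    anorm A (c • y) = ‖c‖ * anorm A y := by
  unfold anorm
  have : (inner ℂ (A (c • y)) (c • y) : ℂ) = ((‖c‖ ^ 2 : ℝ) : ℂ) * inner ℂ (A y) y := by
    rw [map_smul, inner_smul_left, inner_smul_right, ← mul_assoc, mul_comm (starRingEnd ℂ c) c,
      Complex.mul_conj, Complex.normSq_eq_norm_sq]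
  rw [this]
  simp only [Complex.mul_re, Complex.ofReal_re, Complex.ofReal_im, zero_mul, sub_zero]
  rw [Real.sqrt_mul (by positivity), Real.sqrt_sq (norm_nonneg c)]

lemma wA_bddAbove (A T : H →L[ℂ] H) (hA : A.IsPositive) (hT : ABounded A T) :
    BddAbove {c : ℝ | ∃ x : H, anorm A x = 1 ∧ c = ‖(inner ℂ (A (T x)) x : ℂ)‖} := by
  obtain ⟨c, hc, hc'⟩ := hT
  refine ⟨c, fun r hr => ?_⟩
  obtain ⟨x, hx, rfl⟩ := hr
  calc ‖(inner ℂ (A (T x)) x : ℂ)‖ ≤ anorm A (T x) * anorm A x := acs A hA _ _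
    _ ≤ (c * anorm A x) * anorm A x := by
        exact mul_le_mul_of_nonneg_right (hc' x) (anorm_nonneg A x)
    _ = c := by rw [hx]; ring

lemma wA_nonneg (A T : H →L[ℂ] H) (hA : A.IsPositive) (hA0 : A ≠ 0) (hT : ABounded A T) :
    0 ≤ wA A T := by
  -- find x with anorm A x ≠ 0
  have hx : ∃ x : H, anorm A x ≠ 0 := by
    by_contra h
    push_neg at h
    apply hA0
    ext x
    have h0 : ∀ v : H, (inner ℂ (A x) v : ℂ) = 0 := by
      intro v
      have := acs A hA x v
      rw [h x, zero_mul] at this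
      exact norm_eq_zero.mp (le_antisymm this (norm_nonneg _))
    have := h0 (A x)
    rw [← inner_self_eq_zero (𝕜 := ℂ)] at *
    simpa [inner_self_eq_zero] using this
  obtain ⟨x, hx⟩ := hx
  have hxpos : 0 < anorm A x := lt_of_le_of_ne (anorm_nonneg A x) (Ne.symm hx)
  set x' : H := ((anorm A x : ℂ))⁻¹ • x with hx'
  have hx1 : anorm A x' = 1 := by
    rw [hx', anorm_smul, norm_inv, Complex.norm_real, Real.norm_eq_abs, abs_of_pos hxpos, inv_mul_cancel₀ hx]
  apply le_csSup_of_le (wA_bddAbove A T hA hT) (Set.mem_setOf.mpr ⟨x', hx1, rfl⟩)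
  exact norm_nonneg _

lemma inner_AT_le (A T : H →L[ℂ] H) (hA : A.IsPositive) (hT : ABounded A T) (y : H) :
    ‖(inner ℂ (A (T y)) y : ℂ)‖ ≤ wA A T * anorm A y ^ 2 := by
  by_cases hy : anorm A y = 0
  · have h1 : ‖(inner ℂ (A (T y)) y : ℂ)‖ ≤ 0 := by
      have := acs A hA (T y) y
      rw [hy, mul_zero] at this
      exact this
    have h2 : ‖(inner ℂ (A (T y)) y : ℂ)‖ = 0 :=
      le_antisymm h1 (norm_nonneg _)
    rw [h2, hy]
    norm_num
  · have hypos : 0 < anorm A y := lt_of_le_of_ne (anorm_nonneg A y) (Ne.symm hy)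
    set x : H := ((anorm A y : ℂ))⁻¹ • y with hxdef
    have hx1 : anorm A x = 1 := by
      rw [hxdef, anorm_smul, norm_inv, Complex.norm_real, Real.norm_eq_abs, abs_of_pos hypos, inv_mul_cancel₀ hy]
    have hmem : ‖(inner ℂ (A (T x)) x : ℂ)‖ ≤ wA A T :=
      le_csSup (wA_bddAbove A T hA hT) (Set.mem_setOf.mpr ⟨x, hx1, rfl⟩)
    have hcomp : (inner ℂ (A (T x)) x : ℂ)
        = ((anorm A y ^ 2 : ℝ) : ℂ)⁻¹ * inner ℂ (A (T y)) y := by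
      rw [hxdef]
      rw [map_smul, map_smul, inner_smul_left, inner_smul_right]
      rw [map_inv₀, Complex.conj_ofReal]
      push_cast
      ring
    rw [hcomp] at hmem
    rw [norm_mul, norm_inv, Complex.norm_real, Real.norm_eq_abs, abs_of_pos (by positivity)] at hmem
    rw [inv_mul_le_iff₀ (by positivity)] at hmem
    linarith [hmem]

lemma key (A T : H →L[ℂ] H) (hA : A.IsPositive) (hT : ABounded A T)
    (n : ℕ) (hn : 0 < n) (ω' : ℝ) (hω0 : 0 < ω') (hω : wA A T ≤ ω')
    (x : H) (hx : anorm A x = 1) :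
    ‖(inner ℂ (A ((T ^ n) x)) x : ℂ)‖ ≤ ω' ^ n := by
  set w : ℂ := inner ℂ (A ((T ^ n) x)) x with hw
  by_cases hw0 : w = 0
  · rw [hw0]
    simpa using pow_nonneg hω0.le n
  -- choose z with z^n = ω'⁻ⁿ * w/|w|, so |z| = ω'⁻¹
  obtain ⟨z, hz⟩ := IsAlgClosed.exists_pow_nat_eq
    ((((ω' : ℂ))⁻¹ ^ n) * (w / ‖w‖)) hn
  have hwabs : ‖w‖ ≠ 0 := norm_ne_zero_iff.mpr hw0
  have hzabs : ‖z‖ = ω'⁻¹ := by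
    have h1 : ‖z‖ ^ n = ω'⁻¹ ^ n := by
      rw [← norm_pow, hz, norm_mul, norm_pow, norm_inv, Complex.norm_real, Real.norm_eq_abs, abs_of_pos hω0,
        norm_div, Complex.norm_real, Real.norm_eq_abs, abs_of_nonneg (norm_nonneg w),
        div_self hwabs, mul_one]
    exact (pow_left_inj₀ (norm_nonneg z) (inv_nonneg.mpr hω0.le) hn.ne').mp h1
  have hzconj : (starRingEnd ℂ) (z ^ n) * w = ((ω'⁻¹ ^ n * ‖w‖ : ℝ) : ℂ) := by
    rw [hz, map_mul, map_pow, map_inv₀, Complex.conj_ofReal, map_div₀, Complex.conj_ofReal]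
    have hcw : (starRingEnd ℂ) w * w = ((‖w‖ ^ 2 : ℝ) : ℂ) := by
      rw [mul_comm, Complex.mul_conj, Complex.normSq_eq_norm_sq]
    have habsC : ((‖w‖ : ℝ) : ℂ) ≠ 0 := Complex.ofReal_ne_zero.mpr hwabs
    rw [mul_assoc, div_mul_eq_mul_div, hcw, Complex.ofReal_mul, Complex.ofReal_pow,
      Complex.ofReal_pow, Complex.ofReal_inv, sq, mul_div_assoc, div_self habsC, mul_one]
  -- roots of unity
  set ζ : ℂ := Complex.exp (2 * Real.pi * Complex.I / n) with hζdef
  have hζ : IsPrimitiveRoot ζ n := Complex.isPrimitiveRoot_exp n hn.ne'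
  have hζn : ζ ^ n = 1 := hζ.pow_eq_one
  have hζabs : ‖ζ‖ = 1 := by
    rw [hζdef, Complex.norm_exp]
    norm_num [Complex.div_re, Complex.mul_re, Complex.mul_im]
  set y : ℕ → H := fun j => ∑ m ∈ Finset.range n, ((ζ ^ j * z) ^ m) • ((T ^ m) x) with hy
  -- step (i)
  have step1 : ∀ j, y j - (ζ ^ j * z) • T (y j) = x - (z ^ n) • ((T ^ n) x) := by
    intro j
    set a : ℂ := ζ ^ j * z with ha
    have han : a ^ n = z ^ n := by
      rw [ha, mul_pow, ← pow_mul, mul_comm j n, pow_mul, hζn, one_pow, one_mul]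
    have hTy : a • T (y j) = ∑ m ∈ Finset.range n, (a ^ (m + 1)) • ((T ^ (m + 1)) x) := by
      rw [hy]
      simp only [map_sum, map_smul, Finset.smul_sum]
      congr 1 with m
      rw [smul_smul, ← pow_succ']
      congr 1
      rw [pow_succ']
      rfl
    rw [hTy, hy, ← Finset.sum_sub_distrib]
    have := Finset.sum_range_sub' (fun m => (a ^ m) • ((T ^ m) x)) n
    rw [this]
    simp [han]
  -- step (ii)
  have step2 : ∑ j ∈ Finset.range n, y j = (n : ℂ) • x := by
    rw [hy]
    rw [Finset.sum_comm]
    have hterm : ∀ m, (∑ j ∈ Finset.range n, ((ζ ^ j * z) ^ m) • ((T ^ m) x))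
        = ((∑ j ∈ Finset.range n, (ζ ^ m) ^ j) * z ^ m) • ((T ^ m) x) := by
      intro m
      have hjj : ∀ j, ((ζ ^ j * z) ^ m) • ((T ^ m) x) = ((ζ ^ m) ^ j * z ^ m) • ((T ^ m) x) := by
        intro j
        rw [mul_pow, ← pow_mul, mul_comm j m, pow_mul]
      simp_rw [hjj]
      rw [← Finset.sum_smul, ← Finset.sum_mul]
    have hgeom : ∀ m, 0 < m → m < n → (∑ j ∈ Finset.range n, (ζ ^ m) ^ j) = 0 := by
      intro m hm hmn
      rw [geom_sum_eq (hζ.pow_ne_one_of_pos_of_lt hm.ne' hmn)]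
      rw [← pow_mul, mul_comm m n, pow_mul, hζn, one_pow]
      simp
    rw [Finset.sum_congr rfl (fun m _ => hterm m)]
    rw [Finset.sum_eq_single 0]
    · simp
    · intro m hm hm0
      rw [hgeom m (Nat.pos_of_ne_zero hm0) (Finset.mem_range.mp hm)]
      simp
    · intro h
      exact absurd (Finset.mem_range.mpr hn) h
  -- step (iii): each term nonneg
  have step3 : ∀ j, 0 ≤ (inner ℂ (A (y j - (ζ ^ j * z) • T (y j))) (y j) : ℂ).re := by
    intro j
    set a : ℂ := ζ ^ j * z with ha
    have haabs : ‖a‖ = ω'⁻¹ := by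
      rw [ha, norm_mul, norm_pow, hζabs, one_pow, one_mul, hzabs]
    have hexp : (inner ℂ (A (y j - a • T (y j))) (y j) : ℂ)
        = inner ℂ (A (y j)) (y j) - (starRingEnd ℂ a) * inner ℂ (A (T (y j))) (y j) := by
      rw [map_sub, map_smul, inner_sub_left, inner_smul_left]
    rw [hexp, Complex.sub_re]
    have h1 : ((starRingEnd ℂ a) * (inner ℂ (A (T (y j))) (y j) : ℂ)).re
        ≤ anorm A (y j) ^ 2 := by
      calc ((starRingEnd ℂ a) * (inner ℂ (A (T (y j))) (y j) : ℂ)).re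
          ≤ ‖(starRingEnd ℂ a) * (inner ℂ (A (T (y j))) (y j) : ℂ)‖ :=
            Complex.re_le_norm _
        _ = ω'⁻¹ * ‖(inner ℂ (A (T (y j))) (y j) : ℂ)‖ := by
            rw [norm_mul, Complex.norm_conj, haabs]
        _ ≤ ω'⁻¹ * (wA A T * anorm A (y j) ^ 2) := by
            exact mul_le_mul_of_nonneg_left (inner_AT_le A T hA hT (y j))
              (inv_nonneg.mpr hω0.le)
        _ ≤ ω'⁻¹ * (ω' * anorm A (y j) ^ 2) := by
            apply mul_le_mul_of_nonneg_left _ (inv_nonneg.mpr hω0.le)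
            exact mul_le_mul_of_nonneg_right hω (sq_nonneg _)
        _ = anorm A (y j) ^ 2 := by
            field_simp
    have h2 : anorm A (y j) ^ 2 = (inner ℂ (A (y j)) (y j) : ℂ).re := anorm_sq A hA _
    linarith [h1, h2.symm.le]
  -- step (iv): sum up
  have step4 : 0 ≤ (n : ℝ) * (inner ℂ (A (x - (z ^ n) • ((T ^ n) x))) x : ℂ).re := by
    have hsum : 0 ≤ ∑ j ∈ Finset.range n,
        (inner ℂ (A (x - (z ^ n) • ((T ^ n) x))) (y j) : ℂ).re := by
      apply Finset.sum_nonneg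
      intro j _
      rw [← step1 j]
      exact step3 j
    calc (0:ℝ) ≤ _ := hsum
      _ = (∑ j ∈ Finset.range n, (inner ℂ (A (x - (z ^ n) • ((T ^ n) x))) (y j) : ℂ)).re := by
          rw [Complex.re_sum]
      _ = ((inner ℂ (A (x - (z ^ n) • ((T ^ n) x))) (∑ j ∈ Finset.range n, y j) : ℂ)).re := by
          rw [inner_sum]
      _ = ((n : ℂ) * (inner ℂ (A (x - (z ^ n) • ((T ^ n) x))) x : ℂ)).re := by
          rw [step2, inner_smul_right]
      _ = (n : ℝ) * _ := by
          rw [show ((n : ℂ)) = (((n:ℝ) : ℂ)) by push_cast; rfl]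
          rw [Complex.re_ofReal_mul]
  -- conclude
  have hfin : 0 ≤ (inner ℂ (A (x - (z ^ n) • ((T ^ n) x))) x : ℂ).re := by
    have hn' : (0:ℝ) < n := Nat.cast_pos.mpr hn
    nlinarith [step4]
  have hexp2 : (inner ℂ (A (x - (z ^ n) • ((T ^ n) x))) x : ℂ)
      = inner ℂ (A x) x - ((ω'⁻¹ ^ n * ‖w‖ : ℝ) : ℂ) := by
    rw [map_sub, map_smul, inner_sub_left, inner_smul_left, ← hw, hzconj]
  rw [hexp2, Complex.sub_re, Complex.ofReal_re] at hfin
  have hxx : (inner ℂ (A x) x : ℂ).re = 1 := by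
    rw [← anorm_sq A hA, hx]; norm_num
  rw [hxx] at hfin
  -- hfin : 0 ≤ 1 - ω'⁻¹^n * |w|
  have hωn : (0:ℝ) < ω' ^ n := pow_pos hω0 n
  have : ω'⁻¹ ^ n * ‖w‖ ≤ 1 := by linarith
  rw [inv_pow] at this
  calc ‖w‖ = ω' ^ n * ((ω' ^ n)⁻¹ * ‖w‖) := by field_simp
    _ ≤ ω' ^ n * 1 := mul_le_mul_of_nonneg_left this hωn.le
    _ = ω' ^ n := mul_one _

theorem stmt_12 (A T : H →L[ℂ] H) (hA : A.IsPositive) (hA0 : A ≠ 0)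
    (hT : ABounded A T) :
    ∀ n : ℕ, 0 < n → wA A (T ^ n) ≤ (wA A T) ^ n := by
  intro n hn
  have hnn : ∀ ω' : ℝ, wA A T < ω' → wA A (T ^ n) ≤ ω' ^ n := by
    intro ω' hω'
    have hω0 : 0 < ω' := lt_of_le_of_lt (wA_nonneg A T hA hA0 hT) hω'
    apply Real.sSup_le
    · rintro c ⟨x, hx, rfl⟩
      exact key A T hA hT n hn ω' hω0 hω'.le x hx
    · exact pow_nonneg hω0.le n
  have htend : Filter.Tendsto (fun t : ℝ => t ^ n)
      (nhdsWithin (wA A T) (Set.Ioi (wA A T))) (nhds ((wA A T) ^ n)) :=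
    ((continuous_pow n).tendsto _).mono_left nhdsWithin_le_nhds
  exact ge_of_tendsto htend (eventually_nhdsWithin_of_forall (fun t ht => hnn t ht))
end
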